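/- Equip ℝ⁴ with the Lorentzian form ⟨x,y⟩ = −x₀y₀ + x₁y₁ + x₂y₂ + x₃y₃. Suppose ψ_z, ψ_{z̄} = conj(ψ_z) ∈ ℂ⁴, η, N ∈ ℝ⁴ and scalars λ > 0, u, h_z ∈ ℂ, p ∈ ℂ satisfy the metric relations ⟨ψ_z,ψ_z⟩ = 0, ⟨ψ_z,ψ_{z̄}⟩ = λ/2, ⟨η,η⟩ = 1, ⟨N,N⟩ = −1, ⟨η,N⟩ = ⟨ψ_z,η⟩ = ⟨ψ_z,N⟩ = 0 (with ⟨·,·⟩ extended ℂ-bilinearly). Define the formal derivatives η_z := −H ψ_z − (2p/λ) ψ_{z̄} + A N and N_z := (1 − 2|h_z|²/λ) ψ_z − (2h_z²/λ) ψ_{z̄} + A η, where A = −u h_z and H ∈ ℝ. Then ⟨η_z + N_z, η_z + N_z⟩ = (p + h_z²)·(2H − 1 − u²), provided the relation 4|h_z|²/λ = 1 − u² holds. -/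

import Mathlib

set_option maxHeartbeats 2000000
open Complex

/-- ℂ-bilinear extension of the Lorentzian form `−x₀y₀ + x₁y₁ + x₂y₂ + x₃y₃` on ℂ⁴. -/
def lor4c (x y : Fin 4 → ℂ) : ℂ := -(x 0 * y 0) + x 1 * y 1 + x 2 * y 2 + x 3 * y 3

/-- Key computation for harmonicity of the hyperbolic Gauss map: with the structure
equations and metric relations of a conformal surface in `ℍ² × ℝ ⊂ 𝕃⁴`,
`⟨η_z + N_z, η_z + N_z⟩ = (p + h_z²)(2H − 1 − u²)`. -/
theorem stmt12 (ψz : Fin 4 → ℂ) (η N : Fin 4 → ℝ) (lam H : ℝ) (u hz p : ℂ)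
    (hlam : 0 < lam)
    (h1 : lor4c ψz ψz = 0)
    (h2 : lor4c ψz (fun i => starRingEnd ℂ (ψz i)) = lam / 2)
    (h3 : lor4c (fun i => ((η i : ℝ) : ℂ)) (fun i => ((η i : ℝ) : ℂ)) = 1)
    (h4 : lor4c (fun i => ((N i : ℝ) : ℂ)) (fun i => ((N i : ℝ) : ℂ)) = -1)
    (h5 : lor4c (fun i => ((η i : ℝ) : ℂ)) (fun i => ((N i : ℝ) : ℂ)) = 0)
    (h6 : lor4c ψz (fun i => ((η i : ℝ) : ℂ)) = 0)
    (h7 : lor4c ψz (fun i => ((N i : ℝ) : ℂ)) = 0)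
    (hC4 : (4 * ‖hz‖^2 / lam : ℂ) = 1 - u^2) :
    let A : ℂ := -u * hz
    let ηz : Fin 4 → ℂ := fun i =>
      -(H : ℂ) * ψz i - (2 * p / lam) * starRingEnd ℂ (ψz i) + A * ((N i : ℝ) : ℂ)
    let Nz : Fin 4 → ℂ := fun i =>
      (1 - 2 * ‖hz‖^2 / lam) * ψz i - (2 * hz^2 / lam) * starRingEnd ℂ (ψz i)
        + A * ((η i : ℝ) : ℂ)
    lor4c (fun i => ηz i + Nz i) (fun i => ηz i + Nz i)
      = (p + hz^2) * (2 * H - 1 - u^2) := by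
  intro A ηz Nz
  have hlamC : (lam : ℂ) ≠ 0 := by exact_mod_cast hlam.ne'
  have hc1 : lor4c (fun i => starRingEnd ℂ (ψz i)) (fun i => starRingEnd ℂ (ψz i)) = 0 := by
    have := congrArg (starRingEnd ℂ) h1
    simpa [lor4c] using this
  have hc6 : lor4c (fun i => starRingEnd ℂ (ψz i)) (fun i => ((η i : ℝ) : ℂ)) = 0 := by
    have := congrArg (starRingEnd ℂ) h6
    simpa [lor4c, Complex.conj_ofReal] using this
  have hc7 : lor4c (fun i => starRingEnd ℂ (ψz i)) (fun i => ((N i : ℝ) : ℂ)) = 0 := by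
    have := congrArg (starRingEnd ℂ) h7
    simpa [lor4c, Complex.conj_ofReal] using this
  simp only [lor4c, ηz, Nz, A] at *
  have hinv : (lam:ℂ) * ((lam:ℂ))⁻¹ = 1 := mul_inv_cancel₀ hlamC
  set c : ℂ := ((‖hz‖ : ℝ) : ℂ)^2 with hc
  linear_combination (norm := ring1)
    (1 - (H:ℂ) - 2*c/lam)^2 * h1
    + (-(2*p/lam) - 2*hz^2/lam)^2 * hc1
    + 2 * (1 - (H:ℂ) - 2*c/lam) * (-(2*p/lam) - 2*hz^2/lam) * h2
    + (-u*hz)^2 * (h3 + h4 + 2*h5)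
    + 2 * (1 - (H:ℂ) - 2*c/lam) * (-u*hz) * (h6 + h7)
    + 2 * (-(2*p/lam) - 2*hz^2/lam) * (-u*hz) * (hc6 + hc7)
    + (p + hz^2) * hC4
    + (2*(H:ℂ)*p + 2*(H:ℂ)*hz^2 - 2*p - 2*hz^2 + 4*p*c/lam + 4*hz^2*c/lam) * hinv
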